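/- Let v ∈ Z^n be an integer point lying on a k-dimensional face of the integer hull P_I = conv(P ∩ Z^n), let u = b − A v be its slack vector, and let Z = {i ∈ {1,…,m} : u_i ≤ Δ − 1}. Then rank(A_Z) ≥ n − k. -/

import Mathlib

open Matrix Set

noncomputable def matR {m n : ℕ} (A : Matrix (Fin m) (Fin n) ℤ) :
    Matrix (Fin m) (Fin n) ℝ := A.map (fun a => (a : ℝ))

def poly {m n : ℕ} (A : Matrix (Fin m) (Fin n) ℤ) (b : Fin m → ℤ) :
    Set (Fin n → ℝ) := {x | ∀ i, (matR A).mulVec x i ≤ (b i : ℝ)}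

def intPts {n : ℕ} : Set (Fin n → ℝ) := {x | ∀ j, ∃ z : ℤ, x j = (z : ℝ)}

noncomputable def intHull {m n : ℕ} (A : Matrix (Fin m) (Fin n) ℤ) (b : Fin m → ℤ) :
    Set (Fin n → ℝ) := convexHull ℝ (poly A b ∩ intPts)

def maxAbsSubdet {m n : ℕ} (A : Matrix (Fin m) (Fin n) ℤ) : ℕ :=
  Finset.univ.sup fun f : Fin n → Fin m => ((A.submatrix f id).det).natAbs

noncomputable def rowsRank {m n : ℕ} (A : Matrix (Fin m) (Fin n) ℤ) (J : Finset (Fin m)) : ℕ :=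
  ((matR A).submatrix (fun i : {i // i ∈ J} => (i : Fin m)) id).rank

section Aux

lemma mulVec_cast {m n : ℕ} (A : Matrix (Fin m) (Fin n) ℤ) (x : Fin n → ℤ) (i : Fin m) :
    (matR A).mulVec (fun j => (x j : ℝ)) i = ((A.mulVec x i : ℤ) : ℝ) := by
  simp [matR, Matrix.mulVec, dotProduct]

lemma dot_cast {n : ℕ} (x y : Fin n → ℤ) :
    (fun j => (x j : ℝ)) ⬝ᵥ (fun j => (y j : ℝ)) = ((x ⬝ᵥ y : ℤ) : ℝ) := by
  simp [dotProduct]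

lemma convex_poly {m n : ℕ} (A : Matrix (Fin m) (Fin n) ℤ) (b : Fin m → ℤ) :
    Convex ℝ (poly A b) := by
  have h : poly A b = ⋂ i, {x : Fin n → ℝ | (matR A).mulVec x i ≤ (b i : ℝ)} := by
    ext x; simp [poly, Set.mem_iInter]
  rw [h]
  refine convex_iInter fun i => convex_halfSpace_le ⟨fun x y => ?_, fun c x => ?_⟩ _
  · simp [Matrix.mulVec_add]
  · simp [Matrix.mulVec_smul]

lemma intHull_subset_poly {m n : ℕ} (A : Matrix (Fin m) (Fin n) ℤ) (b : Fin m → ℤ) :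
    intHull A b ⊆ poly A b :=
  convexHull_min Set.inter_subset_left (convex_poly A b)

lemma dot_adjugate_col {n : ℕ} (B : Matrix (Fin n) (Fin n) ℤ) (a : Fin n → ℤ) (s : Fin n) :
    a ⬝ᵥ (fun j => B.adjugate j s) = (B.updateRow s a).det := by
  rw [← Matrix.cramer_transpose_apply]
  rw [LinearMap.pi_apply_eq_sum_univ (Matrix.cramer Bᵀ) a]
  simp only [dotProduct, Finset.sum_apply, Pi.smul_apply, smul_eq_mul,
    Matrix.cramer_transpose_apply, Matrix.adjugate_apply]
  refine Finset.sum_congr rfl fun x _ => ?_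
  have hx : (fun j => if x = j then (1:ℤ) else 0) = Pi.single x 1 := by
    funext j; simp [Pi.single_apply, eq_comm]
  rw [hx]

lemma mulVec_adjugate_col {n : ℕ} (B : Matrix (Fin n) (Fin n) ℤ) (s t : Fin n) :
    B.mulVec (fun j => B.adjugate j s) t = if t = s then B.det else 0 := by
  have h : B.mulVec (fun j => B.adjugate j s) t = (B * B.adjugate) t s := by
    simp [Matrix.mulVec, Matrix.mul_apply, dotProduct]
  rw [h, Matrix.mul_adjugate]
  simp [Matrix.one_apply]

lemma updateRow_submatrix {m n : ℕ} (A : Matrix (Fin m) (Fin n) ℤ) (g : Fin n → Fin m)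
    (s : Fin n) (i : Fin m) :
    (A.submatrix g id).updateRow s (A i) = A.submatrix (Function.update g s i) id := by
  ext t j
  by_cases h : t = s <;>
    simp [Matrix.updateRow_apply, Function.update_apply, h]

lemma rowsRank_eq {m n : ℕ} (A : Matrix (Fin m) (Fin n) ℤ) (Z : Finset (Fin m)) :
    rowsRank A Z = Module.finrank ℝ (Submodule.span ℝ (matR A '' ↑Z)) := by
  unfold rowsRank
  rw [← Matrix.rank_transpose, Matrix.rank]
  have h1 : (fun i : {i // i ∈ Z} => ((matR A).submatrix (fun i : {i // i ∈ Z} => (i : Fin m)) id) i)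
      = (matR A) ∘ (fun i : {i // i ∈ Z} => (i : Fin m)) := rfl
  have h2 : Set.range ((matR A).submatrix (fun i : {i // i ∈ Z} => (i : Fin m)) id)
      = matR A '' ↑Z := by
    rw [show Set.range ((matR A).submatrix (fun i : {i // i ∈ Z} => (i : Fin m)) id)
        = Set.range ((matR A) ∘ (fun i : {i // i ∈ Z} => (i : Fin m))) from congrArg _ h1,
      Set.range_comp (g := ((matR A : Matrix (Fin m) (Fin n) ℝ) : Fin m → Fin n → ℝ))]
    congr 1
    ext i
    simp
  have h3 : LinearMap.range (((matR A).submatrix (fun i : {i // i ∈ Z} => (i : Fin m)) id)ᵀ.mulVecLin)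
      = Submodule.span ℝ (matR A '' ↑Z) := by
    rw [Matrix.range_mulVecLin]; exact congrArg _ h2
  rw [h3]

end Aux
/-- If `v ∈ ℤⁿ` lies on a `k`-dimensional face of the integer hull `P_I`, `u = b - A v` is its
slack vector and `Z = {i : u_i ≤ Δ - 1}`, then `rank(A_Z) ≥ n - k`. -/
theorem face_point_small_slack_rank {m n k : ℕ}
    (A : Matrix (Fin m) (Fin n) ℤ) (b : Fin m → ℤ) (Δ : ℕ)
    (hΔ : maxAbsSubdet A = Δ) (hΔ1 : 1 ≤ Δ)
    (hrank : (matR A).rank = n)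
    (hfull : affineSpan ℝ (poly A b) = ⊤)
    (F : Set (Fin n → ℝ)) (hF : IsExtreme ℝ (intHull A b) F)
    (hFconv : Convex ℝ F) (hFne : F.Nonempty)
    (hFdim : Module.finrank ℝ (affineSpan ℝ F).direction = k)
    (v : Fin n → ℤ) (hvF : (fun j => (v j : ℝ)) ∈ F)
    (Z : Finset (Fin m))
    (hZ : Z = Finset.univ.filter fun i : Fin m => b i - A.mulVec v i ≤ (Δ : ℤ) - 1) :
    n - k ≤ rowsRank A Z := by
  classical
  -- Step 1 : the rows of `matR A` span `ℝⁿ`.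
  have hrowsAll : Submodule.span ℝ (Set.range (matR A)) = ⊤ := by
    have h1 : ((matR A)ᵀ).rank = n := by rw [Matrix.rank_transpose]; exact hrank
    have h2 : Submodule.span ℝ (Set.range (matR A))
        = LinearMap.range ((matR A)ᵀ).mulVecLin := by
      rw [Matrix.range_mulVecLin]; rfl
    apply Submodule.eq_top_of_finrank_eq
    rw [h2]
    rw [show Module.finrank ℝ (LinearMap.range ((matR A)ᵀ).mulVecLin) = ((matR A)ᵀ).rank from rfl]
    rw [h1, Module.finrank_pi]
    simp
  -- Step 2 : a maximal independent subset `s` of the rows indexed by `Z`,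
  -- extended to a set `c` of rows of `A` spanning `ℝⁿ`.
  set rowsZ : Set (Fin n → ℝ) := matR A '' ↑Z with hrowsZ
  have hrowsZsub : rowsZ ⊆ Set.range (matR A) := Set.image_subset_range _ _
  obtain ⟨s, hs_sub, hs_span, hs_ind⟩ := exists_linearIndependent ℝ rowsZ
  obtain ⟨c, hc_sub, hsc, hc_spanle, (hc_ind : LinearIndependent ℝ ((↑) : c → Fin n → ℝ))⟩ :=
    exists_linearIndepOn_id_extension hs_ind (hs_sub.trans hrowsZsub)
  have hc_span : Submodule.span ℝ c = ⊤ := by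
    rw [eq_top_iff, ← hrowsAll]
    exact Submodule.span_le.mpr hc_spanle
  have hcfin : c.Finite := hc_ind.setFinite
  haveI : Fintype c := hcfin.fintype
  let bas : Module.Basis c ℝ (Fin n → ℝ) := Module.Basis.mk hc_ind (by rw [Subtype.range_coe, hc_span])
  have hcard : Fintype.card c = n := by
    have h := Module.finrank_eq_card_basis bas
    rw [Module.finrank_pi] at h
    simpa using h.symm
  obtain ⟨e⟩ : Nonempty (Fin n ≃ c) :=
    ⟨(Fintype.equivFinOfCardEq hcard).symm⟩
  -- Step 3 : choose row indices `g` realizing `c`, giving a nonsingular matrix `B`.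
  have hchoice : ∀ t : Fin n, ∃ i : Fin m, matR A i = ((e t : _) : Fin n → ℝ) := fun t =>
    hc_sub (e t).2
  choose g hg using hchoice
  set B : Matrix (Fin n) (Fin n) ℤ := A.submatrix g id with hB
  have hBr : matR B = (matR A).submatrix g id := rfl
  have hBrows : ∀ t, matR B t = ((e t : _) : Fin n → ℝ) := fun t => hg t
  have hBind : LinearIndependent ℝ (fun t => matR B t) := by
    have : (fun t => matR B t) = (fun x : c => (x : Fin n → ℝ)) ∘ e := by
      funext t; rw [hBrows]; rfl
    rw [this]
    exact hc_ind.comp e e.injective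
  have hBunit : IsUnit (matR B) := Matrix.linearIndependent_rows_iff_isUnit.mp hBind
  have hBdetR : ((B.det : ℤ) : ℝ) ≠ 0 := by
    have h1 : IsUnit (matR B).det := (Matrix.isUnit_iff_isUnit_det _).mp hBunit
    have h2 : (matR B).det = ((B.det : ℤ) : ℝ) := ((Int.castRingHom ℝ).map_det B).symm
    rw [h2] at h1
    exact h1.ne_zero
  -- Step 4 : the index set `T` of rows of `B` coming from `s`.
  set T : Finset (Fin n) := Finset.univ.filter (fun t => ((e t : _) : Fin n → ℝ) ∈ s) with hT
  haveI : Fintype s := hs_ind.setFinite.fintype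
  have hscard : s.toFinset.card = rowsRank A Z := by
    rw [rowsRank_eq, ← hrowsZ, ← hs_span, finrank_span_set_eq_card hs_ind]
  have hTcard : T.card ≤ rowsRank A Z := by
    rw [← hscard]
    apply Finset.card_le_card_of_injOn (fun t => ((e t : _) : Fin n → ℝ))
    · intro t ht
      rw [hT] at ht
      simp only [Finset.mem_coe, Finset.mem_filter, Finset.mem_univ, true_and] at ht
      simpa using ht
    · intro t1 _ t2 _ h
      exact e.injective (Subtype.val_injective h)
  have hTn : T.card ≤ n := (Finset.card_le_card (Finset.subset_univ T)).trans (by simp)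
  -- Step 5 : `v` satisfies the constraints.
  have hvP : (fun j => ((v j : ℤ) : ℝ)) ∈ poly A b := intHull_subset_poly A b (hF.1 hvF)
  have hAv : ∀ i, A.mulVec v i ≤ b i := by
    intro i
    have h := hvP i
    rw [mulVec_cast] at h
    exact_mod_cast h
  have hslack : ∀ i ∉ Z, (Δ : ℤ) ≤ b i - A.mulVec v i := by
    intro i hi
    rw [hZ] at hi
    simp only [Finset.mem_filter, Finset.mem_univ, true_and, not_le] at hi
    omega
  -- Step 6 : the integral directions `d s'` for `s' ∉ T`.
  set d : Fin n → Fin n → ℤ := fun s' j => B.adjugate j s' with hd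
  have hAd : ∀ (s' : Fin n) (i : Fin m), A.mulVec (d s') i = (B.updateRow s' (A i)).det := by
    intro s' i
    exact dot_adjugate_col B (A i) s'
  have hAd_bound : ∀ (s' : Fin n) (i : Fin m), (A.mulVec (d s') i).natAbs ≤ Δ := by
    intro s' i
    rw [hAd, hB, updateRow_submatrix, ← hΔ, maxAbsSubdet]
    exact Finset.le_sup (f := fun f : Fin n → Fin m => ((A.submatrix f id).det).natAbs)
      (Finset.mem_univ (Function.update g s' i))
  have hBd : ∀ (s' t : Fin n), B.mulVec (d s') t = if t = s' then B.det else 0 := by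
    intro s' t
    exact mulVec_adjugate_col B s' t
  -- Step 7 : rows indexed by `Z` annihilate `d s'` when `s' ∉ T`.
  have hZd : ∀ s', s' ∉ T → ∀ i ∈ Z, A.mulVec (d s') i = 0 := by
    intro s' hs' i hi
    set dR : Fin n → ℝ := fun j => ((d s' j : ℤ) : ℝ) with hdR
    have hker : ∀ x ∈ s, x ⬝ᵥ dR = 0 := by
      intro x hx
      have hxc : x ∈ c := hsc hx
      set t : Fin n := e.symm ⟨x, hxc⟩ with ht'
      have hxt : matR B t = x := by rw [hBrows]; simp [ht']
      have htT : t ∈ T := by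
        rw [hT]
        simp only [Finset.mem_filter, Finset.mem_univ, true_and]
        rw [show ((e t : _) : Fin n → ℝ) = x by simp [ht']]
        exact hx
      have hts : t ≠ s' := fun h => hs' (h ▸ htT)
      have h1 : x ⬝ᵥ dR = ((B t ⬝ᵥ d s' : ℤ) : ℝ) := by
        rw [← hxt, ← dot_cast]
        rfl
      have h2 : B t ⬝ᵥ d s' = 0 := by
        have h3 := hBd s' t
        rw [if_neg hts] at h3
        exact h3
      rw [h1, h2]
      simp
    have hspan : matR A i ∈ Submodule.span ℝ s := by
      rw [hs_span]
      exact Submodule.subset_span ⟨i, hi, rfl⟩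
    have hdot : matR A i ⬝ᵥ dR = 0 := by
      refine Submodule.span_induction (fun x hx => hker x hx) ?_ ?_ ?_ hspan
      · exact zero_dotProduct _
      · intro x y _ _ hx hy
        rw [add_dotProduct, hx, hy, add_zero]
      · intro a x _ hx
        rw [smul_dotProduct, hx, smul_zero]
    have hcast : matR A i ⬝ᵥ dR = ((A i ⬝ᵥ d s' : ℤ) : ℝ) := by
      rw [← dot_cast]
      rfl
    rw [hcast] at hdot
    show A i ⬝ᵥ d s' = 0
    exact_mod_cast hdot
  -- Step 8 : `v ± d s'` is an integer point of `P` (for `s' ∉ T`).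
  have hmem : ∀ s', s' ∉ T → ∀ ε : ℤ, ε = 1 ∨ ε = -1 →
      (fun j => ((v j + ε * d s' j : ℤ) : ℝ)) ∈ intHull A b := by
    intro s' hs' ε hε
    apply subset_convexHull
    constructor
    · intro i
      rw [mulVec_cast]
      have hlin : A.mulVec (fun j => v j + ε * d s' j) i
          = A.mulVec v i + ε * A.mulVec (d s') i := by
        simp [Matrix.mulVec, dotProduct, Finset.mul_sum, Finset.sum_add_distrib,
          mul_add, mul_comm, mul_left_comm, mul_assoc]
      have hineq : A.mulVec (fun j => v j + ε * d s' j) i ≤ b i := by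
        rw [hlin]
        by_cases hi : i ∈ Z
        · rw [hZd s' hs' i hi]
          have := hAv i
          omega
        · have h1 := hslack i hi
          have h2 := hAd_bound s' i
          have h3 : |A.mulVec (d s') i| ≤ (Δ : ℤ) := by
            rw [Int.abs_eq_natAbs]
            exact_mod_cast h2
          have h4 := abs_le.mp h3
          rcases hε with h | h <;> rw [h] <;> omega
      exact_mod_cast hineq
    · intro j
      exact ⟨_, rfl⟩
  -- Step 9 : for `s' ∉ T`, the direction `d s'` lies in the direction of `aff F`.
  have hdF : ∀ s', s' ∉ T →
      (fun j => ((d s' j : ℤ) : ℝ)) ∈ (affineSpan ℝ F).direction := by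
    intro s' hs'
    have hplus := hmem s' hs' 1 (Or.inl rfl)
    have hminus := hmem s' hs' (-1) (Or.inr rfl)
    have hopen : (fun j => ((v j : ℤ) : ℝ)) ∈
        openSegment ℝ (fun j => ((v j + 1 * d s' j : ℤ) : ℝ))
          (fun j => ((v j + (-1) * d s' j : ℤ) : ℝ)) := by
      refine ⟨1/2, 1/2, by norm_num, by norm_num, by norm_num, ?_⟩
      funext j
      simp only [Pi.add_apply, Pi.smul_apply, smul_eq_mul]
      push_cast
      ring
    obtain ⟨h1, h2⟩ := And.intro (hF.2 hplus hminus hvF hopen) (hF.right_mem_of_mem_openSegment hplus hminus hvF hopen)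
    have h3 := AffineSubspace.vsub_mem_direction
      (mem_affineSpan ℝ h1) (mem_affineSpan ℝ hvF)
    have h4 : (fun j => ((v j + 1 * d s' j : ℤ) : ℝ)) -ᵥ (fun j => ((v j : ℤ) : ℝ))
        = (fun j => ((d s' j : ℤ) : ℝ)) := by
      funext j
      show ((v j + 1 * d s' j : ℤ) : ℝ) - ((v j : ℤ) : ℝ) = ((d s' j : ℤ) : ℝ)
      push_cast
      ring
    rw [h4] at h3
    exact h3
  -- Step 10 : the directions `d s'`, `s' ∉ T`, are linearly independent.
  set f : {s' : Fin n // s' ∉ T} → (Fin n → ℝ) :=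
    fun s' => (fun j => ((d s' j : ℤ) : ℝ)) with hf
  have hLf : ∀ s' : {s' : Fin n // s' ∉ T},
      (matR B).mulVecLin (f s') = ((B.det : ℤ) : ℝ) • (Pi.single (s' : Fin n) (1 : ℝ) : Fin n → ℝ) := by
    intro s'
    funext t
    show (matR B).mulVec (f s') t = _
    have h1 : (matR B).mulVec (f s') t = ((B.mulVec (d s') t : ℤ) : ℝ) := by
      rw [← mulVec_cast]
    rw [h1, hBd]
    simp only [Pi.smul_apply, Pi.single_apply, smul_eq_mul]
    by_cases h : (t : Fin n) = (s' : Fin n) <;> simp [h]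
  have hsingles : LinearIndependent ℝ
      (fun s' : {s' : Fin n // s' ∉ T} => (Pi.single (s' : Fin n) (1 : ℝ) : Fin n → ℝ)) := by
    have h0 : LinearIndependent ℝ (fun i : Fin n => (Pi.single i (1 : ℝ) : Fin n → ℝ)) := by
      have := (Pi.basisFun ℝ (Fin n)).linearIndependent
      have heq : ⇑(Pi.basisFun ℝ (Fin n))
          = fun i : Fin n => (Pi.single i (1 : ℝ) : Fin n → ℝ) := by
        funext i
        exact Pi.basisFun_apply ℝ (Fin n) i
      rwa [heq] at this
    exact h0.comp (fun s' : {s' : Fin n // s' ∉ T} => (s' : Fin n)) Subtype.val_injective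
  have hfind : LinearIndependent ℝ f := by
    apply LinearIndependent.of_comp (matR B).mulVecLin
    have heq : (matR B).mulVecLin ∘ f
        = fun s' : {s' : Fin n // s' ∉ T} =>
            ((B.det : ℤ) : ℝ) • (Pi.single (s' : Fin n) (1 : ℝ) : Fin n → ℝ) := by
      funext s'
      exact hLf s'
    rw [heq]
    have h1 := hsingles.units_smul
      ((fun _ => Units.mk0 ((B.det : ℤ) : ℝ) hBdetR) : {s' : Fin n // s' ∉ T} → ℝˣ)
    have heq2 : (((fun _ => Units.mk0 ((B.det : ℤ) : ℝ) hBdetR) : {s' : Fin n // s' ∉ T} → ℝˣ) •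
        (fun s' : {s' : Fin n // s' ∉ T} => (Pi.single (s' : Fin n) (1 : ℝ) : Fin n → ℝ)))
        = fun s' : {s' : Fin n // s' ∉ T} =>
            ((B.det : ℤ) : ℝ) • (Pi.single (s' : Fin n) (1 : ℝ) : Fin n → ℝ) := by
      funext s'
      simp [Units.smul_def]
    rwa [heq2] at h1
  -- Step 11 : count dimensions and conclude.
  let f' : {s' : Fin n // s' ∉ T} → (affineSpan ℝ F).direction :=
    fun s' => ⟨f s', hdF s' s'.2⟩
  have hf'ind : LinearIndependent ℝ f' := by
    apply LinearIndependent.of_comp (affineSpan ℝ F).direction.subtype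
    have hcomp : (affineSpan ℝ F).direction.subtype ∘ f' = f := rfl
    rwa [hcomp]
  have hcardle : Fintype.card {s' : Fin n // s' ∉ T} ≤ k := by
    rw [← hFdim]
    exact hf'ind.fintype_card_le_finrank
  have hcardeq : Fintype.card {s' : Fin n // s' ∉ T} = n - T.card := by
    rw [Fintype.card_subtype_compl, Fintype.card_fin, Fintype.card_coe]
  rw [hcardeq] at hcardle
  omega
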